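/- arXiv:2002.05299 — 8 statements merged into one kernel-verified Lean document; each statement's English description precedes it below -/
import Mathlib

section
/- Let X be a finite set of n points in R^D. Then there exists a point y in R^D whose Tukey depth in X is at least ⌈n/(D+1)⌉, where the Tukey depth of y in X is the minimum over all unit vectors u of the number of points x in X with ⟨u, x - y⟩ ≥ 0. -/
open RealInnerProductSpace Classical

/-- Rado's centerpoint theorem: any finite set `X` of `n` points in `ℝ^D` admits a point `y`
whose Tukey depth in `X` is at least `⌈n/(D+1)⌉`, i.e. every closed halfspace whose boundary
hyperplane passes through `y` contains at least `⌈n/(D+1)⌉` points of `X`. -/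
theorem rado_centerpoint (D n : ℕ) (X : Finset (EuclideanSpace ℝ (Fin D)))
    (hX : X.card = n) :
    ∃ y : EuclideanSpace ℝ (Fin D), ∀ u : EuclideanSpace ℝ (Fin D), ‖u‖ = 1 →
      ⌈(n : ℝ) / (D + 1)⌉₊ ≤ (X.filter (fun x => 0 ≤ ⟪u, x - y⟫)).card := by
  classical
  set k : ℕ := ⌈(n : ℝ) / (D + 1)⌉₊ with hk
  rcases Nat.eq_zero_or_pos k with hk0 | hkpos
  · exact ⟨0, fun u _ => by simp [hk0]⟩
  have hn1 : 1 ≤ n := by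
    by_contra h
    push_neg at h
    interval_cases n
    simp [hk] at hkpos
  -- key counting fact: (D+1) * (k-1) < n
  have hcount : (D + 1) * (k - 1) < n := by
    have h1 : (k - 1 : ℕ) < k := Nat.sub_lt hkpos one_pos
    have h2 : ((k - 1 : ℕ) : ℝ) < (n : ℝ) / (D + 1) := Nat.lt_ceil.mp h1
    have hD : (0 : ℝ) < (D : ℝ) + 1 := by positivity
    have h3 : ((D : ℝ) + 1) * ((k - 1 : ℕ) : ℝ) < n := by
      rw [mul_comm]
      exact (lt_div_iff₀ hD).mp h2
    exact_mod_cast h3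
  have hkn : k ≤ n := by
    have := Nat.le_mul_of_pos_left (k - 1) (show 0 < D + 1 by omega)
    omega
  -- the family of convex hulls of subsets of X of size n - k + 1
  set s : Finset (Finset (EuclideanSpace ℝ (Fin D))) := X.powersetCard (n - k + 1) with hs
  have hinter : (⋂ S ∈ s, (convexHull ℝ (S : Set (EuclideanSpace ℝ (Fin D))))).Nonempty := by
    apply Convex.helly_theorem' (𝕜 := ℝ)
    · exact fun S _ => convex_convexHull ℝ _
    · intro I hI hIcard
      rw [finrank_euclideanSpace_fin] at hIcard
      -- find a point of X in all S ∈ I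
      have hbig : (I.biUnion (fun S => X \ S)).card < n := by
        calc (I.biUnion (fun S => X \ S)).card
            ≤ ∑ S ∈ I, (X \ S).card := Finset.card_biUnion_le
          _ ≤ ∑ _S ∈ I, (k - 1) := by
              apply Finset.sum_le_sum
              intro S hS
              have hSs := hI hS
              rw [hs, Finset.mem_powersetCard] at hSs
              rw [Finset.card_sdiff_of_subset hSs.1, hX, hSs.2]
              omega
          _ = I.card * (k - 1) := by rw [Finset.sum_const, smul_eq_mul]
          _ ≤ (D + 1) * (k - 1) := Nat.mul_le_mul_right _ hIcard
          _ < n := hcount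
      have hne : (X \ I.biUnion (fun S => X \ S)).Nonempty := by
        rw [← Finset.card_pos]
        have h := Finset.le_card_sdiff (I.biUnion (fun S => X \ S)) X
        omega
      obtain ⟨x, hx⟩ := hne
      rw [Finset.mem_sdiff] at hx
      refine ⟨x, ?_⟩
      simp only [Set.mem_iInter]
      intro S hS
      apply subset_convexHull
      have hxS : x ∈ S := by
        by_contra hxS
        exact hx.2 (Finset.mem_biUnion.mpr ⟨S, hS, Finset.mem_sdiff.mpr ⟨hx.1, hxS⟩⟩)
      exact hxS
  obtain ⟨y, hy⟩ := hinter
  simp only [Set.mem_iInter] at hy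
  refine ⟨y, fun u hu => ?_⟩
  by_contra hlt
  push_neg at hlt
  -- the complementary open halfspace contains ≥ n - k + 1 points
  set B : Finset (EuclideanSpace ℝ (Fin D)) := X.filter (fun x => ⟪u, x - y⟫ < 0) with hB
  have hBcard : n - k + 1 ≤ B.card := by
    have hsplit := Finset.card_filter_add_card_filter_not
      (s := X) (p := fun x => 0 ≤ ⟪u, x - y⟫)
    have hBeq : (X.filter (fun x => ¬ 0 ≤ ⟪u, x - y⟫)).card = B.card := by
      rw [hB]
      congr 1
      ext x
      simp [not_le]
    rw [hX, hBeq] at hsplit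
    have hlt' : (X.filter (fun x => 0 ≤ ⟪u, x - y⟫)).card < k := by
      convert hlt using 4
    have h2 : n < k + B.card := by
      rw [← hsplit]
      exact Nat.add_lt_add_right hlt' _
    clear_value k B
    clear hlt hBeq hsplit hlt' hk hB
    omega
  obtain ⟨S, hSB, hScard⟩ := Finset.exists_subset_card_eq hBcard
  have hSs : S ∈ s := by
    rw [hs, Finset.mem_powersetCard]
    exact ⟨hSB.trans (Finset.filter_subset _ _), hScard⟩
  have hyS := hy S hSs
  have hconv : Convex ℝ {x : EuclideanSpace ℝ (Fin D) | ⟪u, x - y⟫ < 0} := by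
    have heq : {x : EuclideanSpace ℝ (Fin D) | ⟪u, x - y⟫ < 0}
        = {x : EuclideanSpace ℝ (Fin D) | ⟪u, x⟫ < ⟪u, y⟫} := by
      ext x
      simp [inner_sub_right, sub_neg]
    rw [heq]
    exact convex_halfSpace_lt ⟨fun a b => inner_add_right u a b, fun c a => by
      simp [inner_smul_right]⟩ _
  have hsub : (S : Set (EuclideanSpace ℝ (Fin D))) ⊆
      {x : EuclideanSpace ℝ (Fin D) | ⟪u, x - y⟫ < 0} := by
    intro x hx
    have hxB := hSB hx
    rw [hB, Finset.mem_filter] at hxB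
    exact hxB.2
  have hfin := convexHull_min hsub hconv hyS
  simp at hfin
end

section
/- Let X = {x_1,…,x_n} ⊂ R^D be a finite set and Y ⊆ X a subset such that (i) #Y > n − n/(2D+2), (ii) Y is contained in a closed halfspace {x : ⟨v, x⟩ ≥ 0} for some nonzero v, and (iii) every point of Y on the hyperplane {x : ⟨v, x⟩ = 0} equals 0. Then the relative interior of the depth level set D_{1/(2D+2)}(X) is contained in the convex hull of Y, which in turn is contained in the open halfspace {x : ⟨v, x⟩ > 0} together with the point 0. -/
open RealInnerProductSpace Classical

/-- Tukey depth. -/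
noncomputable def tdepth {D : ℕ} (y : EuclideanSpace ℝ (Fin D))
    (X : Finset (EuclideanSpace ℝ (Fin D))) : ℕ :=
  sInf {m : ℕ | ∃ u : EuclideanSpace ℝ (Fin D), ‖u‖ = 1 ∧
    m = (X.filter (fun x => 0 ≤ ⟪u, x - y⟫)).card}

/-- The β-depth level set `D_β(X)`. -/
noncomputable def depthLevelSet {D : ℕ} (β : ℝ) (X : Finset (EuclideanSpace ℝ (Fin D))) :
    Set (EuclideanSpace ℝ (Fin D)) :=
  {y | β * X.card ≤ (tdepth y X : ℝ)}

/-- If `Y ⊆ X` contains more than `n - n/(2D+2)` of the `n` points of `X`, lies in the closed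
halfspace `{⟪v, x⟫ ≥ 0}`, and the only point of `Y` on the boundary hyperplane is `0`, then the
relative interior of `D_{1/(2D+2)}(X)` is contained in `conv(Y)`, which is contained in the open
halfspace together with `{0}`. -/
theorem depth_level_set_in_halfspace (D n : ℕ) (X Y : Finset (EuclideanSpace ℝ (Fin D)))
    (hX : X.card = n) (hYX : Y ⊆ X)
    (v : EuclideanSpace ℝ (Fin D)) (hv : v ≠ 0)
    (hcard : (n : ℝ) - (n : ℝ) / (2 * D + 2) < (Y.card : ℝ))
    (hhalf : ∀ y ∈ Y, 0 ≤ ⟪v, y⟫)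
    (hbdry : ∀ y ∈ Y, ⟪v, y⟫ = 0 → y = 0) :
    intrinsicInterior ℝ (depthLevelSet (1 / (2 * D + 2)) X) ⊆
        convexHull ℝ (Y : Set (EuclideanSpace ℝ (Fin D))) ∧
      convexHull ℝ (Y : Set (EuclideanSpace ℝ (Fin D))) ⊆
        {x : EuclideanSpace ℝ (Fin D) | 0 < ⟪v, x⟫} ∪ {0} := by
  have hD : (0:ℝ) < 2 * (D:ℝ) + 2 := by positivity
  constructor
  · refine subset_trans intrinsicInterior_subset ?_
    intro y hy
    by_contra hyc
    simp only [depthLevelSet, Set.mem_setOf_eq] at hy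
    have hYne : Y.Nonempty := by
      rcases Y.eq_empty_or_nonempty with h | h
      · exfalso
        rw [h] at hcard
        simp only [Finset.card_empty, Nat.cast_zero] at hcard
        have h2 : (n:ℝ) / (2 * (D:ℝ) + 2) ≤ n := by
          apply div_le_self (Nat.cast_nonneg n); linarith
        linarith
      · exact h
    have hconv : Convex ℝ (convexHull ℝ (Y : Set (EuclideanSpace ℝ (Fin D)))) :=
      convex_convexHull ℝ _
    have hclosed : IsClosed (convexHull ℝ (Y : Set (EuclideanSpace ℝ (Fin D)))) :=
      (Y : Set (EuclideanSpace ℝ (Fin D))).toFinite.isClosed_convexHull (𝕜 := ℝ)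
    obtain ⟨f, c, hfc, hcy⟩ := geometric_hahn_banach_closed_point hconv hclosed hyc
    set w := (InnerProductSpace.toDual ℝ (EuclideanSpace ℝ (Fin D))).symm f with hwdef
    have hw : ∀ a, ⟪w, a⟫ = f a := fun a => InnerProductSpace.toDual_symm_apply
    obtain ⟨y0, hy0⟩ := hYne
    have hy0' : f y0 < c := hfc y0 (subset_convexHull ℝ _ hy0)
    have hw0 : w ≠ 0 := by
      intro h
      have h1 : f y0 = 0 := by rw [← hw y0, h, inner_zero_left]
      have h2 : f y = 0 := by rw [← hw y, h, inner_zero_left]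
      linarith
    set u := ‖w‖⁻¹ • w with hudef
    have hun : ‖u‖ = 1 := norm_smul_inv_norm hw0
    have hneg : ∀ x ∈ Y, ⟪u, x - y⟫ < 0 := by
      intro x hx
      have hfx : f x < c := hfc x (subset_convexHull ℝ _ hx)
      have heq : ⟪u, x - y⟫ = ‖w‖⁻¹ * (f x - f y) := by
        rw [hudef, real_inner_smul_left, inner_sub_right, hw, hw]
      rw [heq]
      have hwpos : 0 < ‖w‖⁻¹ := inv_pos.2 (norm_pos_iff.2 hw0)
      nlinarith
    have hsub : X.filter (fun x => 0 ≤ ⟪u, x - y⟫) ⊆ X \ Y := by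
      intro x hx
      simp only [Finset.mem_filter] at hx
      refine Finset.mem_sdiff.2 ⟨hx.1, fun hxY => ?_⟩
      exact absurd hx.2 (not_le.2 (hneg x hxY))
    have hle : tdepth y X ≤ (X.filter (fun x => 0 ≤ ⟪u, x - y⟫)).card :=
      Nat.sInf_le ⟨u, hun, rfl⟩
    have hle2 : (X.filter (fun x => 0 ≤ ⟪u, x - y⟫)).card ≤ X.card - Y.card := by
      calc (X.filter (fun x => 0 ≤ ⟪u, x - y⟫)).card ≤ (X \ Y).card :=
            Finset.card_le_card hsub
        _ = X.card - Y.card := Finset.card_sdiff_of_subset hYX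
    have hYle : Y.card ≤ X.card := Finset.card_le_card hYX
    have hcast : ((X.card - Y.card : ℕ) : ℝ) = (n:ℝ) - Y.card := by
      rw [Nat.cast_sub hYle, hX]
    have hfinal : (tdepth y X : ℝ) ≤ (n:ℝ) - Y.card := by
      rw [← hcast]; exact_mod_cast le_trans hle hle2
    rw [hX] at hy
    have heq2 : (1 / (2 * (D:ℝ) + 2)) * n = (n:ℝ) / (2 * (D:ℝ) + 2) := by ring
    linarith
  · have key : ∀ x ∈ ({x | 0 < ⟪v, x⟫} ∪ {0} : Set (EuclideanSpace ℝ (Fin D))),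
        0 ≤ ⟪v, x⟫ ∧ (⟪v, x⟫ = 0 → x = 0) := by
      intro x hx
      rcases hx with h | h
      · exact ⟨le_of_lt h, fun h0 => absurd h0 (ne_of_gt h)⟩
      · rw [Set.mem_singleton_iff] at h
        subst h
        simp [inner_zero_right]
    have hS : Convex ℝ ({x | 0 < ⟪v, x⟫} ∪ {0} : Set (EuclideanSpace ℝ (Fin D))) := by
      intro x hx z hz a b ha hb hab
      obtain ⟨hx1, hx2⟩ := key x hx
      obtain ⟨hz1, hz2⟩ := key z hz
      have hval : ⟪v, a • x + b • z⟫ = a * ⟪v, x⟫ + b * ⟪v, z⟫ := by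
        rw [inner_add_right, real_inner_smul_right, real_inner_smul_right]
      have hnn : (0:ℝ) ≤ a * ⟪v, x⟫ + b * ⟪v, z⟫ := by nlinarith
      rcases lt_or_eq_of_le hnn with h | h
      · left
        rw [Set.mem_setOf_eq, hval]
        exact h
      · right
        have h1 : a * ⟪v, x⟫ = 0 := by nlinarith
        have h2 : b * ⟪v, z⟫ = 0 := by nlinarith
        have hax : a • x = 0 := by
          rcases mul_eq_zero.1 h1 with h' | h'
          · rw [h', zero_smul]
          · rw [hx2 h', smul_zero]
        have hbz : b • z = 0 := by
          rcases mul_eq_zero.1 h2 with h' | h'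
          · rw [h', zero_smul]
          · rw [hz2 h', smul_zero]
        simp [Set.mem_singleton_iff, hax, hbz]
    refine convexHull_min ?_ hS
    intro x hx
    rcases eq_or_lt_of_le (hhalf x hx) with h | h
    · exact Or.inr (Set.mem_singleton_iff.2 (hbdry x hx h.symm))
    · exact Or.inl h
end

section
/- Let X = {x_1,…,x_n} ⊂ R^D and Y ⊆ X satisfy: #Y > n − n/(2D+2); Y is contained in the closed halfspace {x : ⟨v, x⟩ ≥ 0}; every point of Y on the hyperplane {⟨v, x⟩ = 0} equals 0; and fewer than n/2 points of Y lie on that hyperplane. Then there exists a point z with ⟨v, z⟩ > 0 whose Tukey depth in X is at least n/(2(D+1)). -/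
open RealInnerProductSpace Classical

private lemma exists_centerpoint {D : ℕ} (Y : Finset (EuclideanSpace ℝ (Fin D)))
    (hY : Y.Nonempty) :
    ∃ c : EuclideanSpace ℝ (Fin D), ∀ u : EuclideanSpace ℝ (Fin D),
      (Y.card : ℝ) / (D + 1) ≤ ((Y.filter fun y => 0 ≤ ⟪u, y - c⟫).card : ℝ) := by
  classical
  set m := Y.card with hm
  have hm0 : 0 < (m : ℝ) := by exact_mod_cast Finset.card_pos.2 hY
  set s : Finset (Finset (EuclideanSpace ℝ (Fin D))) :=
    Y.powerset.filter (fun S => (m : ℝ) - S.card < m / (D + 1)) with hs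
  have hmem : ∀ S ∈ s, S ⊆ Y ∧ (((Y \ S).card : ℝ) < m / (D + 1)) := by
    intro S hS
    rw [hs, Finset.mem_filter, Finset.mem_powerset] at hS
    refine ⟨hS.1, ?_⟩
    have hle := Finset.card_le_card hS.1
    rw [Finset.card_sdiff_of_subset hS.1]
    rw [Nat.cast_sub hle]
    exact hS.2
  have hhelly : (⋂ S ∈ s, convexHull ℝ (S : Set (EuclideanSpace ℝ (Fin D)))).Nonempty := by
    apply Convex.helly_theorem' (𝕜 := ℝ)
    · intro S _
      exact convex_convexHull ℝ _
    · intro I hIs hIcard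
      rcases I.eq_empty_or_nonempty with rfl | hIne
      · simp
      have hsum : ∀ S ∈ I, ((Y \ S).card : ℝ) < m / (D + 1) :=
        fun S hS => (hmem S (hIs hS)).2
      have hIc : (I.card : ℝ) ≤ (D : ℝ) + 1 := by
        rw [finrank_euclideanSpace_fin] at hIcard
        exact_mod_cast hIcard
      have hcard' : ((I.biUnion (fun S => Y \ S)).card : ℝ) < m := by
        calc ((I.biUnion fun S => Y \ S).card : ℝ)
            ≤ ∑ S ∈ I, ((Y \ S).card : ℝ) := by exact_mod_cast Finset.card_biUnion_le
          _ < ∑ _S ∈ I, (m : ℝ) / (D + 1) := Finset.sum_lt_sum_of_nonempty hIne hsum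
          _ = I.card * ((m : ℝ) / (D + 1)) := by rw [Finset.sum_const, nsmul_eq_mul]
          _ ≤ ((D : ℝ) + 1) * ((m : ℝ) / (D + 1)) := by
              apply mul_le_mul_of_nonneg_right hIc (by positivity)
          _ = m := by
              field_simp
      have hBsub : I.biUnion (fun S => Y \ S) ⊆ Y :=
        Finset.biUnion_subset.2 fun S _ => Finset.sdiff_subset
      have hne : (Y \ I.biUnion (fun S => Y \ S)).Nonempty := by
        rw [← Finset.card_pos, Finset.card_sdiff_of_subset hBsub]
        have h1 : (I.biUnion fun S => Y \ S).card < m := by exact_mod_cast hcard'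
        omega
      obtain ⟨y, hy⟩ := hne
      rw [Finset.mem_sdiff] at hy
      refine ⟨y, Set.mem_iInter₂.2 fun S hS => ?_⟩
      apply subset_convexHull
      simp only [Finset.mem_coe]
      by_contra hnot
      exact hy.2 (Finset.mem_biUnion.2 ⟨S, hS, Finset.mem_sdiff.2 ⟨hy.1, hnot⟩⟩)
  obtain ⟨c, hc⟩ := hhelly
  refine ⟨c, fun u => ?_⟩
  by_contra hlt
  push_neg at hlt
  set T := Y.filter (fun y => ¬ 0 ≤ ⟪u, y - c⟫) with hT
  have hTs : T ∈ s := by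
    rw [hs, Finset.mem_filter, Finset.mem_powerset]
    refine ⟨Finset.filter_subset _ _, ?_⟩
    have hsplit : (Y.filter (fun y => 0 ≤ ⟪u, y - c⟫)).card + T.card = m :=
      Finset.card_filter_add_card_filter_not _
    have h2 : (m : ℝ) - T.card = ((Y.filter (fun y => 0 ≤ ⟪u, y - c⟫)).card : ℝ) := by
      rw [← hsplit]; push_cast; ring
    rw [h2]
    exact hlt
  have hcT : c ∈ convexHull ℝ (T : Set (EuclideanSpace ℝ (Fin D))) :=
    Set.mem_iInter₂.1 hc T hTs
  have hhalf : c ∈ {x : EuclideanSpace ℝ (Fin D) | ⟪u, x⟫ < ⟪u, c⟫} := by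
    refine convexHull_min ?_
      (convex_halfSpace_lt ⟨fun a b => inner_add_right _ _ _,
        fun r a => real_inner_smul_right _ _ _⟩ _) hcT
    intro y hy
    rw [Finset.mem_coe, hT, Finset.mem_filter] at hy
    have h3 := hy.2
    push_neg at h3
    rw [inner_sub_right] at h3
    show ⟪u, y⟫ < ⟪u, c⟫
    linarith
  rw [Set.mem_setOf_eq] at hhalf
  exact lt_irrefl _ hhalf

private lemma tdepth_mem {D : ℕ} (hD : 1 ≤ D) (z : EuclideanSpace ℝ (Fin D))
    (X : Finset (EuclideanSpace ℝ (Fin D))) :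
    ∃ u : EuclideanSpace ℝ (Fin D), ‖u‖ = 1 ∧
      tdepth z X = (X.filter (fun x => 0 ≤ ⟪u, x - z⟫)).card := by
  have hu : ‖EuclideanSpace.single (⟨0, hD⟩ : Fin D) (1 : ℝ)‖ = 1 := by
    rw [EuclideanSpace.norm_single]; norm_num
  have : tdepth z X ∈ {m : ℕ | ∃ u : EuclideanSpace ℝ (Fin D), ‖u‖ = 1 ∧
      m = (X.filter (fun x => 0 ≤ ⟪u, x - z⟫)).card} :=
    Nat.sInf_mem ⟨_, _, hu, rfl⟩
  exact this

/-- If `Y ⊆ X` contains more than `n - n/(2D+2)` points, lies in the closed halfspace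
`{⟪v, x⟫ ≥ 0}` with all boundary points of `Y` equal to `0`, and fewer than `n/2` points of `Y`
lie on the boundary hyperplane, then there is a point `z` strictly inside the halfspace with
Tukey depth at least `n/(2(D+1))` in `X`. -/
theorem deep_point_in_open_halfspace (D n : ℕ) (X Y : Finset (EuclideanSpace ℝ (Fin D)))
    (hX : X.card = n) (hYX : Y ⊆ X)
    (v : EuclideanSpace ℝ (Fin D)) (hv : v ≠ 0)
    (hcard : (n : ℝ) - (n : ℝ) / (2 * D + 2) < (Y.card : ℝ))
    (hhalf : ∀ y ∈ Y, 0 ≤ ⟪v, y⟫)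
    (hbdry : ∀ y ∈ Y, ⟪v, y⟫ = 0 → y = 0)
    (hfew : ((Y.filter (fun y => ⟪v, y⟫ = 0)).card : ℝ) < (n : ℝ) / 2) :
    ∃ z : EuclideanSpace ℝ (Fin D), 0 < ⟪v, z⟫ ∧
      (n : ℝ) / (2 * (D + 1)) ≤ (tdepth z X : ℝ) := by
  classical
  have hD : 1 ≤ D := by
    rcases Nat.eq_zero_or_pos D with h0 | h; swap
    · exact h
    subst h0
    exact absurd (by ext i; exact i.elim0 : v = 0) hv
  have hn0 : (0 : ℝ) ≤ n := Nat.cast_nonneg n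
  have hDpos : (0 : ℝ) < 2 * (D : ℝ) + 2 := by positivity
  have hdivle : (n : ℝ) / (2 * D + 2) ≤ (n : ℝ) / 2 := by
    apply div_le_div_of_nonneg_left hn0 (by norm_num)
    linarith [Nat.cast_nonneg (α := ℝ) D]
  have hn2 : (n : ℝ) / 2 < (Y.card : ℝ) := by linarith
  have hYne : Y.Nonempty := by
    rw [← Finset.card_pos]
    by_contra h
    push_neg at h
    interval_cases h' : Y.card <;> simp_all <;> linarith
  have hkey : (n : ℝ) / (2 * (D + 1)) ≤ (Y.card : ℝ) / (D + 1) := by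
    rw [div_le_div_iff₀ (by positivity) (by positivity)]
    ring_nf
    nlinarith [hn2]
  by_cases hbig : 1 < (n : ℝ) / (2 * (D + 1))
  · -- use the centerpoint
    obtain ⟨c, hc⟩ := exists_centerpoint Y hYne
    have hbig' : 1 < (Y.card : ℝ) / (D + 1) := lt_of_lt_of_le hbig hkey
    have hvc : 0 < ⟪v, c⟫ := by
      by_contra h
      push_neg at h
      have h1 := hc (-v)
      have hsub : Y.filter (fun y => 0 ≤ ⟪-v, y - c⟫) ⊆ {0} := by
        intro y hy
        rw [Finset.mem_filter] at hy
        have h2 : ⟪v, y - c⟫ ≤ 0 := by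
          have := hy.2
          rw [inner_neg_left] at this
          linarith
        rw [inner_sub_right] at h2
        have h3 : ⟪v, y⟫ = 0 := le_antisymm (by linarith) (hhalf y hy.1)
        simp [hbdry y hy.1 h3]
      have h4 : ((Y.filter (fun y => 0 ≤ ⟪-v, y - c⟫)).card : ℝ) ≤ 1 := by
        have := Finset.card_le_card hsub
        simp only [Finset.card_singleton] at this
        exact_mod_cast this
      linarith
    refine ⟨c, hvc, ?_⟩
    obtain ⟨u, hu, heq⟩ := tdepth_mem hD c X
    rw [heq]
    have hmono : Y.filter (fun x => 0 ≤ ⟪u, x - c⟫) ⊆ X.filter (fun x => 0 ≤ ⟪u, x - c⟫) :=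
      Finset.filter_subset_filter _ hYX
    have := Finset.card_le_card hmono
    have h5 := hc u
    calc (n : ℝ) / (2 * (D + 1)) ≤ (Y.card : ℝ) / (D + 1) := hkey
      _ ≤ ((Y.filter (fun x => 0 ≤ ⟪u, x - c⟫)).card : ℝ) := h5
      _ ≤ ((X.filter (fun x => 0 ≤ ⟪u, x - c⟫)).card : ℝ) := by exact_mod_cast this
  · -- a positive point of Y suffices
    push_neg at hbig
    have hlt : (Y.filter (fun y => ⟪v, y⟫ = 0)).card < Y.card := by
      have : ((Y.filter (fun y => ⟪v, y⟫ = 0)).card : ℝ) < (Y.card : ℝ) := by linarith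
      exact_mod_cast this
    have hne : (Y \ Y.filter (fun y => ⟪v, y⟫ = 0)).Nonempty := by
      rw [← Finset.card_pos, Finset.card_sdiff_of_subset (Finset.filter_subset _ _)]
      omega
    obtain ⟨z, hz⟩ := hne
    rw [Finset.mem_sdiff, Finset.mem_filter] at hz
    have hzY : z ∈ Y := hz.1
    have hzvz : 0 < ⟪v, z⟫ := by
      rcases lt_or_eq_of_le (hhalf z hzY) with h | h
      · exact h
      · exact absurd ⟨hzY, h.symm⟩ hz.2
    refine ⟨z, hzvz, ?_⟩
    obtain ⟨u, hu, heq⟩ := tdepth_mem hD z X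
    rw [heq]
    have hzX : z ∈ X.filter (fun x => 0 ≤ ⟪u, x - z⟫) := by
      rw [Finset.mem_filter]
      exact ⟨hYX hzY, by simp⟩
    have h1 : 1 ≤ (X.filter (fun x => 0 ≤ ⟪u, x - z⟫)).card :=
      Finset.card_pos.2 ⟨z, hzX⟩
    have : (1 : ℝ) ≤ ((X.filter (fun x => 0 ≤ ⟪u, x - z⟫)).card : ℝ) := by exact_mod_cast h1
    linarith
end

section
/- Let X be a finite multiset of n real numbers and suppose more than 3n/4 of them lie in an interval [a, b]. Then every element of the 1/4-trimmed set T_{0.25}X (the elements between the empirical 0.25- and 0.75-quantiles of X) lies in [a, b], and hence the trimmed average ave(T_{0.25}X) lies in [a, b]. -/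
open Classical

/-- The `p`-th empirical quantile of a finite multiset of reals. -/
noncomputable def mQuantile (p : ℝ) (X : Multiset ℝ) : ℝ :=
  (X.sort (· ≤ ·)).getD (⌈p * X.card⌉₊ - 1) 0

/-- The 1/4-trimming operator: elements between the 0.25- and 0.75-quantiles. -/
noncomputable def trim25 (X : Multiset ℝ) : Multiset ℝ :=
  X.filter (fun x => mQuantile 0.25 X ≤ x ∧ x ≤ mQuantile 0.75 X)

private lemma aux_countP_lt (L : List ℝ) (hL : L.Pairwise (· ≤ ·)) {i : ℕ} (hi : i < L.length)
    {a : ℝ} (h : L[i] < a) : i + 1 ≤ L.countP (fun x => decide (x < a)) := by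
  have htake : ∀ x ∈ L.take (i+1), (fun x => decide (x < a)) x = true := by
    intro x hx
    obtain ⟨j, hj, rfl⟩ := List.mem_iff_getElem.mp hx
    have hj' : j < L.length := by
      have := List.length_take (i := i+1) (l := L)
      omega
    simp only [List.getElem_take]
    have hji : j ≤ i := by
      have := List.length_take (i := i+1) (l := L); omega
    have : L[j] ≤ L[i] := by
      have := hL.rel_get_of_le (a := ⟨j, hj'⟩) (b := ⟨i, hi⟩) (by simpa using hji)
      simpa using this
    simp [lt_of_le_of_lt this h]
  calc i + 1 = (L.take (i+1)).length := by rw [List.length_take]; omega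
    _ = (L.take (i+1)).countP (fun x => decide (x < a)) := (List.countP_eq_length.mpr htake).symm
    _ ≤ L.countP (fun x => decide (x < a)) := (List.take_sublist _ _).countP_le

private lemma aux_countP_gt (L : List ℝ) (hL : L.Pairwise (· ≤ ·)) {i : ℕ} (hi : i < L.length)
    {b : ℝ} (h : b < L[i]) : L.length - i ≤ L.countP (fun x => decide (b < x)) := by
  have hdrop : ∀ x ∈ L.drop i, (fun x => decide (b < x)) x = true := by
    intro x hx
    obtain ⟨j, hj, rfl⟩ := List.mem_iff_getElem.mp hx
    have hlen := List.length_drop (i := i) (l := L)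
    have hj' : i + j < L.length := by omega
    simp only [List.getElem_drop]
    have : L[i] ≤ L[i + j] := by
      have := hL.rel_get_of_le (a := ⟨i, hi⟩) (b := ⟨i + j, hj'⟩) (by simp)
      simpa using this
    simp [lt_of_lt_of_le h this]
  calc L.length - i = (L.drop i).length := (List.length_drop (i := i) (l := L)).symm
    _ = (L.drop i).countP (fun x => decide (b < x)) := (List.countP_eq_length.mpr hdrop).symm
    _ ≤ L.countP (fun x => decide (b < x)) := (List.drop_sublist _ _).countP_le

/-- If more than `3n/4` of the `n` elements of `X` lie in `[a, b]`, then every element of the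
trimmed set `T_{0.25}X` lies in `[a, b]`, and hence so does the trimmed average. -/
theorem trimmed_mean_in_inlier_interval (X : Multiset ℝ) (n : ℕ) (hn : X.card = n)
    (a b : ℝ)
    (hmaj : 3 * (n : ℝ) / 4 < ((X.filter (fun x => a ≤ x ∧ x ≤ b)).card : ℝ)) :
    (∀ x ∈ trim25 X, a ≤ x ∧ x ≤ b) ∧
    a ≤ (trim25 X).sum / ((trim25 X).card : ℝ) ∧
    (trim25 X).sum / ((trim25 X).card : ℝ) ≤ b := by
  classical
  set L : List ℝ := X.sort (· ≤ ·) with hLdef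
  have hsort : L.Pairwise (· ≤ ·) := X.pairwise_sort _
  have hXL : (L : Multiset ℝ) = X := X.sort_eq _
  have hLlen : L.length = n := by rw [hLdef, Multiset.length_sort, hn]
  set k : ℕ := (X.filter (fun x => a ≤ x ∧ x ≤ b)).card with hkdef
  have hk_le : k ≤ n := by
    rw [hkdef, ← hn]; exact Multiset.card_le_card (Multiset.filter_le _ _)
  have hkpos : 0 < (k : ℝ) := lt_of_le_of_lt (by positivity) hmaj
  have hnpos : 0 < n := lt_of_lt_of_le (by exact_mod_cast hkpos) hk_le
  have hnposR : (0 : ℝ) < n := by exact_mod_cast hnpos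
  -- outlier counts
  set c1 : ℕ := Multiset.countP (fun x => x < a) X with hc1def
  set c2 : ℕ := Multiset.countP (fun x => b < x) X with hc2def
  have houtlier : ∀ (p : ℝ → Prop) [DecidablePred p],
      (∀ x, p x → ¬(a ≤ x ∧ x ≤ b)) → Multiset.countP p X + k ≤ n := by
    intro p _ hp
    have h1 : Multiset.countP p X ≤ Multiset.countP (fun x => ¬(a ≤ x ∧ x ≤ b)) X := by
      rw [Multiset.countP_eq_card_filter, Multiset.countP_eq_card_filter]
      exact Multiset.card_le_card (Multiset.monotone_filter_right X hp)
    have h2 : n = k + Multiset.countP (fun x => ¬(a ≤ x ∧ x ≤ b)) X := by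
      rw [hkdef, ← Multiset.countP_eq_card_filter, ← hn]
      exact Multiset.card_eq_countP_add_countP _ X
    omega
  have hc1 : c1 + k ≤ n := houtlier _ (fun x hx h => absurd h.1 (not_le.mpr hx))
  have hc2 : c2 + k ≤ n := houtlier _ (fun x hx h => absurd h.2 (not_le.mpr hx))
  have hc1R : (c1 : ℝ) < n / 4 := by
    have : (c1 : ℝ) + k ≤ n := by exact_mod_cast hc1
    linarith
  have hc2R : (c2 : ℝ) < n / 4 := by
    have : (c2 : ℝ) + k ≤ n := by exact_mod_cast hc2
    linarith
  -- countP as list countP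
  have hc1L : c1 = L.countP (fun x => decide (x < a)) := by
    rw [hc1def, ← hXL, Multiset.coe_countP]
  have hc2L : c2 = L.countP (fun x => decide (b < x)) := by
    rw [hc2def, ← hXL, Multiset.coe_countP]
  -- quantile indices
  set i25 : ℕ := ⌈(0.25 : ℝ) * n⌉₊ with hi25def
  set i75 : ℕ := ⌈(0.75 : ℝ) * n⌉₊ with hi75def
  have hi25pos : 1 ≤ i25 := Nat.ceil_pos.mpr (by positivity)
  have hi75pos : 1 ≤ i75 := Nat.ceil_pos.mpr (by positivity)
  have hi25le : i25 ≤ n := Nat.ceil_le.mpr (by nlinarith)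
  have hi75le : i75 ≤ n := Nat.ceil_le.mpr (by nlinarith)
  have hidx25 : i25 - 1 < L.length := by rw [hLlen]; omega
  have hidx75 : i75 - 1 < L.length := by rw [hLlen]; omega
  have hm25 : mQuantile 0.25 X = L[i25 - 1] := by
    rw [mQuantile, hn, ← hLdef, ← hi25def]
    exact List.getD_eq_getElem L 0 hidx25
  have hm75 : mQuantile 0.75 X = L[i75 - 1] := by
    rw [mQuantile, hn, ← hLdef, ← hi75def]
    exact List.getD_eq_getElem L 0 hidx75
  -- the 0.25 quantile is ≥ a
  have hq25 : a ≤ L[i25 - 1] := by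
    by_contra hcon
    push_neg at hcon
    have hcount := aux_countP_lt L hsort hidx25 hcon
    rw [← hc1L] at hcount
    have h1 : i25 ≤ c1 := by omega
    have h2 : (0.25 : ℝ) * n ≤ i25 := Nat.le_ceil _
    have h3 : (i25 : ℝ) ≤ c1 := by exact_mod_cast h1
    linarith
  -- the 0.75 quantile is ≤ b
  have hq75 : L[i75 - 1] ≤ b := by
    by_contra hcon
    push_neg at hcon
    have hcount := aux_countP_gt L hsort hidx75 hcon
    rw [← hc2L, hLlen] at hcount
    have h1 : n - i75 + 1 ≤ c2 := by omega
    have h2 : (i75 : ℝ) < 0.75 * n + 1 := Nat.ceil_lt_add_one (by positivity)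
    have h3 : ((n - i75 + 1 : ℕ) : ℝ) ≤ c2 := by exact_mod_cast h1
    have h4 : ((n - i75 + 1 : ℕ) : ℝ) = (n : ℝ) - i75 + 1 := by
      push_cast [Nat.cast_sub hi75le]; ring
    rw [h4] at h3
    linarith
  -- the two quantiles are ordered
  have hqq : L[i25 - 1] ≤ L[i75 - 1] := by
    have hle : i25 ≤ i75 := Nat.ceil_le_ceil (by nlinarith)
    have := hsort.rel_get_of_le (a := ⟨i25 - 1, hidx25⟩) (b := ⟨i75 - 1, hidx75⟩)
      (by simp; omega)
    simpa using this
  -- every element of the trimmed set is in [a, b]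
  have hmem : ∀ x ∈ trim25 X, a ≤ x ∧ x ≤ b := by
    intro x hx
    rw [trim25, Multiset.mem_filter, hm25, hm75] at hx
    exact ⟨le_trans hq25 hx.2.1, le_trans hx.2.2 hq75⟩
  -- the trimmed set is nonempty
  have hne : L[i25 - 1] ∈ trim25 X := by
    rw [trim25, Multiset.mem_filter, hm25, hm75]
    refine ⟨?_, le_refl _, hqq⟩
    rw [← hXL]
    exact_mod_cast List.getElem_mem hidx25
  have hcardpos : 0 < ((trim25 X).card : ℝ) := by
    have : 0 < (trim25 X).card := Multiset.card_pos.mpr (fun h => by simp [h] at hne)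
    exact_mod_cast this
  refine ⟨hmem, ?_, ?_⟩
  · rw [le_div_iff₀ hcardpos]
    have := Multiset.card_nsmul_le_sum (fun x hx => (hmem x hx).1)
    rw [nsmul_eq_mul] at this
    linarith [this]
  · rw [div_le_iff₀ hcardpos]
    have := Multiset.sum_le_card_nsmul (trim25 X) b (fun x hx => (hmem x hx).2)
    rw [nsmul_eq_mul] at this
    linarith [this]
end

section
/- Fix a, b with 0 ≤ a < b and b − a < π, and let w_1, …, w_m be points on the unit circle with arguments in [a, b], with m > n/2 where n ≥ m is the total number of measurement points (the remaining n − m points are arbitrary on the circle). Then the function F(z) = Σ_{k=1}^n d_∠(z, w_k) (where w_{m+1},…,w_n are the arbitrary points) attains a local minimum at some point z with arg(z) ∈ [a, b]. -/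
/-- The angular distance on the unit circle. -/
noncomputable def dAng (z w : ℂ) : ℝ := |(z * (starRingEnd ℂ) w).arg|

open Real Complex

/-- circular distance between angles -/
noncomputable def cd (s t : ℝ) : ℝ := Real.arccos (Real.cos (s - t))

lemma arccos_anti {x y : ℝ} (h : x ≤ y) : Real.arccos y ≤ Real.arccos x := by
  unfold Real.arccos; have := Real.monotone_arcsin h; linarith

lemma cd_nonneg (s t : ℝ) : 0 ≤ cd s t := Real.arccos_nonneg _
lemma cd_le_pi (s t : ℝ) : cd s t ≤ π := Real.arccos_le_pi _
lemma cd_comm (s t : ℝ) : cd s t = cd t s := by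
  unfold cd; rw [← neg_sub t s, Real.cos_neg]
lemma cd_eq_abs {s t : ℝ} (h : |s - t| ≤ π) : cd s t = |s - t| := by
  rw [cd, ← Real.cos_abs (s - t), Real.arccos_cos (abs_nonneg _) h]

lemma sqrt_one_sub_cos_sq (v : ℝ) : Real.sqrt (1 - Real.cos v ^ 2) = |Real.sin v| := by
  have := Real.sin_sq_add_cos_sq v
  rw [show (1 : ℝ) - Real.cos v ^ 2 = Real.sin v ^ 2 by linarith, Real.sqrt_sq_eq_abs]

lemma cd_triangle (s t u : ℝ) : cd s u ≤ cd s t + cd t u := by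
  have hvt : s - u = (s - t) + (t - u) := by ring
  set v := s - t with hv
  set w := t - u with hw
  set v' := Real.arccos (Real.cos v) with hv'
  set w' := Real.arccos (Real.cos w) with hw'
  have hv0 : 0 ≤ v' := Real.arccos_nonneg _
  have hw0 : 0 ≤ w' := Real.arccos_nonneg _
  have hcos : Real.cos (v' + w') ≤ Real.cos (v + w) := by
    rw [Real.cos_add, Real.cos_add, hv', hw',
      Real.cos_arccos (Real.neg_one_le_cos v) (Real.cos_le_one v),
      Real.cos_arccos (Real.neg_one_le_cos w) (Real.cos_le_one w),
      Real.sin_arccos, Real.sin_arccos, sqrt_one_sub_cos_sq, sqrt_one_sub_cos_sq]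
    have : Real.sin v * Real.sin w ≤ |Real.sin v| * |Real.sin w| := by
      rw [← abs_mul]; exact le_abs_self _
    linarith
  show Real.arccos (Real.cos (s - u)) ≤ v' + w'
  rw [hvt]
  by_cases h : v' + w' ≤ π
  · calc Real.arccos (Real.cos (v + w)) ≤ Real.arccos (Real.cos (v' + w')) := arccos_anti hcos
    _ = v' + w' := Real.arccos_cos (by linarith) h
  · exact le_trans (Real.arccos_le_pi _) (by linarith)

lemma abs_arg_eq {z : ℂ} (hz : z ≠ 0) : |z.arg| = Real.arccos (z.re / ‖z‖) := by
  rw [← Complex.cos_arg hz, ← Real.cos_abs, Real.arccos_cos (abs_nonneg _) (Complex.abs_arg_le_pi z)]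

lemma dAng_exp (s t : ℝ) :
    dAng (Complex.exp (s * Complex.I)) (Complex.exp (t * Complex.I)) = cd s t := by
  have h1 : Complex.exp (↑s * Complex.I) * (starRingEnd ℂ) (Complex.exp (↑t * Complex.I))
      = Complex.exp (↑(s - t) * Complex.I) := by
    rw [← Complex.exp_conj, ← Complex.exp_add]
    congr 1
    simp [map_mul, Complex.conj_ofReal, Complex.conj_I]
    ring
  rw [dAng, h1, abs_arg_eq (Complex.exp_ne_zero _), Complex.norm_exp_ofReal_mul_I,
    Complex.exp_ofReal_mul_I_re, div_one, cd]

lemma arg_exp_of_mem {θ : ℝ} (h : θ ∈ Set.Ioc (-Real.pi) Real.pi) :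
    (Complex.exp (↑θ * Complex.I)).arg = θ := by
  rw [Complex.exp_mul_I]
  exact_mod_cast Complex.arg_cos_add_sin_mul_I h

lemma card_filter_fin_lt (n m : ℕ) (h : m ≤ n) :
    (Finset.univ.filter (fun k : Fin n => (k : ℕ) < m)).card = m := by
  rw [Finset.card_filter, Fin.sum_univ_eq_sum_range (fun i => if i < m then 1 else 0),
    ← Finset.card_filter]
  have he : (Finset.range n).filter (fun i => i < m) = Finset.range m := by
    ext i; simp; omega
  rw [he, Finset.card_range]

lemma sum_est (n m : ℕ) (f g : Fin n → ℝ) (δ : ℝ) (hδ : 0 ≤ δ)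
    (h1 : ∀ k : Fin n, (k : ℕ) < m → g k + δ ≤ f k)
    (h2 : ∀ k : Fin n, g k - δ ≤ f k) (hmn : m ≤ n) (hmaj : (n : ℝ) ≤ 2 * m) :
    ∑ k, g k ≤ ∑ k, f k := by
  have key : ∑ k : Fin n, (if (k : ℕ) < m then δ else -δ) ≤ ∑ k : Fin n, (f k - g k) := by
    apply Finset.sum_le_sum
    intro k _
    by_cases h : (k : ℕ) < m
    · simp only [h, if_true]; linarith [h1 k h]
    · simp only [h, if_false]; linarith [h2 k]
  have hcard2 : (Finset.univ.filter (fun k : Fin n => ¬ (k : ℕ) < m)).card = n - m := by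
    have h2 := Finset.card_filter_add_card_filter_not
      (s := (Finset.univ : Finset (Fin n))) (p := fun k : Fin n => (k : ℕ) < m)
    rw [card_filter_fin_lt n m hmn, Finset.card_univ, Fintype.card_fin] at h2
    omega
  have hsum : ∑ k : Fin n, (if (k : ℕ) < m then δ else -δ)
      = (m : ℝ) * δ - ((n : ℝ) - m) * δ := by
    rw [Finset.sum_ite, Finset.sum_const, Finset.sum_const, card_filter_fin_lt n m hmn, hcard2]
    rw [nsmul_eq_mul, nsmul_eq_mul, Nat.cast_sub hmn]
    ring
  have hpos : 0 ≤ (m : ℝ) * δ - ((n : ℝ) - m) * δ := by nlinarith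
  rw [hsum] at key
  rw [Finset.sum_sub_distrib] at key
  linarith

/-- If a strict majority `m > n/2` of the unit-circle points `w_1, …, w_n` have arguments in an
arc `[a, b]` of width less than `π`, then `F(z) = Σ_k d_∠(z, w_k)` attains a local minimum (on
the circle) at some point with argument in `[a, b]`. -/
theorem l1_circle_local_min_in_arc (n m : ℕ) (ws : Fin n → ℂ) (a b : ℝ)
    (h0a : 0 ≤ a) (hab : a < b) (hwidth : b - a < Real.pi)
    (hunit : ∀ k, ‖ws k‖ = 1)
    (hin : ∀ k : Fin n, (k : ℕ) < m → (ws k).arg ∈ Set.Icc a b)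
    (hmn : m ≤ n) (hmaj : (n : ℝ) / 2 < (m : ℝ)) :
    ∃ z : ℂ, ‖z‖ = 1 ∧ z.arg ∈ Set.Icc a b ∧
      ∃ ε > 0, ∀ w : ℂ, ‖w‖ = 1 → dAng w z < ε →
        (∑ k, dAng z (ws k)) ≤ ∑ k, dAng w (ws k) := by
  have hpi := Real.pi_pos
  -- m ≥ 1
  have hm1 : 0 < m := by
    by_contra h
    push_neg at h
    interval_cases m
    have : (0:ℝ) ≤ (n:ℝ)/2 := by positivity
    simp at hmaj; linarith
  set β : Fin n → ℝ := fun k => (ws k).arg with hβ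
  set b' : ℝ := min b π with hb'
  have hn1 : 0 < n := lt_of_lt_of_le hm1 hmn
  have hk0 : β ⟨0, hn1⟩ ∈ Set.Icc a b := hin ⟨0, hn1⟩ hm1
  have haπ : a ≤ π := le_trans hk0.1 (Complex.arg_le_pi _)
  have hab' : a ≤ b' := le_min (le_of_lt hab) haπ
  have hb'b : b' ≤ b := min_le_left _ _
  have hb'π : b' ≤ π := min_le_right _ _
  have hβmem : ∀ k : Fin n, (k : ℕ) < m → β k ∈ Set.Icc a b' := by
    intro k hk
    exact ⟨(hin k hk).1, le_min (hin k hk).2 (Complex.arg_le_pi _)⟩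
  set G : ℝ → ℝ := fun θ => ∑ k, cd θ (β k) with hG
  have hGc : Continuous G := by
    apply continuous_finset_sum
    intro k _
    exact Real.continuous_arccos.comp (Real.continuous_cos.comp (continuous_id.sub continuous_const))
  obtain ⟨θ₀, hθ₀mem, hθ₀min⟩ := isCompact_Icc.exists_isMinOn (Set.nonempty_Icc.mpr hab')
    hGc.continuousOn
  have hθ₀a : a ≤ θ₀ := hθ₀mem.1
  have hθ₀b : θ₀ ≤ b' := hθ₀mem.2
  set z : ℂ := Complex.exp (↑θ₀ * Complex.I) with hz
  have hzabs : ‖z‖ = 1 := Complex.norm_exp_ofReal_mul_I θ₀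
  have hargz : z.arg = θ₀ := arg_exp_of_mem ⟨by linarith, by linarith⟩
  -- rewrite the objective through exp
  have hws : ∀ k, ws k = Complex.exp (↑(β k) * Complex.I) := by
    intro k
    have := Complex.norm_mul_exp_arg_mul_I (ws k)
    rw [hunit k] at this
    simpa using this.symm
  have hFG : ∀ s : ℝ, (∑ k, dAng (Complex.exp (↑s * Complex.I)) (ws k)) = G s := by
    intro s
    apply Finset.sum_congr rfl
    intro k _
    rw [hws k, dAng_exp]
  set ε : ℝ := π - (b' - a) with hε
  have hεpos : 0 < ε := by
    have : b' - a ≤ b - a := by linarith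
    simp only [hε]; linarith
  refine ⟨z, hzabs, ⟨by rw [hargz]; exact hθ₀a, by rw [hargz]; linarith⟩, ε, hεpos, ?_⟩
  intro w hw hd
  set ψ : ℝ := (w * (starRingEnd ℂ) z).arg with hψ
  have hψlt : |ψ| < ε := hd
  set φ : ℝ := θ₀ + ψ with hφ
  have hwφ : w = Complex.exp (↑φ * Complex.I) := by
    have habs : ‖w * (starRingEnd ℂ) z‖ = 1 := by
      rw [norm_mul, Complex.norm_conj, hw, hzabs, one_mul]
    have h1 : w * (starRingEnd ℂ) z = Complex.exp (↑ψ * Complex.I) := by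
      have := Complex.norm_mul_exp_arg_mul_I (w * (starRingEnd ℂ) z)
      rw [habs] at this
      simpa using this.symm
    have h2 : (starRingEnd ℂ) z * z = 1 := by
      rw [mul_comm, Complex.mul_conj, Complex.normSq_eq_norm_sq, hzabs]
      norm_num
    calc w = w * ((starRingEnd ℂ) z * z) := by rw [h2, mul_one]
      _ = (w * (starRingEnd ℂ) z) * z := by ring
      _ = Complex.exp (↑ψ * Complex.I) * Complex.exp (↑θ₀ * Complex.I) := by rw [h1]
      _ = Complex.exp (↑φ * Complex.I) := by
          rw [← Complex.exp_add]; congr 1; simp only [hφ]; push_cast; ring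
  -- reduce to G θ₀ ≤ G φ
  have hgoal : (∑ k, dAng z (ws k)) = G θ₀ := hFG θ₀
  have hgoal2 : (∑ k, dAng w (ws k)) = G φ := by rw [hwφ]; exact hFG φ
  rw [hgoal, hgoal2]
  have h2m : (n : ℝ) ≤ 2 * m := by linarith
  -- case analysis on φ
  rcases le_or_gt φ b' with hφb | hφb
  · rcases le_or_gt a φ with hφa | hφa
    · exact hθ₀min ⟨hφa, hφb⟩
    · -- φ < a : left excursion
      have hδε : a - φ < ε := by
        have h2 : θ₀ - φ = -ψ := by rw [hφ]; ring
        have := neg_abs_le ψ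
        linarith
      have hstep : G a ≤ G φ := by
        apply sum_est n m _ _ (a - φ) (by linarith) _ _ hmn h2m
        · intro k hk
          have hβk := hβmem k hk
          have h1 : 0 ≤ β k - φ := by linarith [hβk.1]
          have h2 : β k - φ ≤ π := by linarith [hβk.2]
          have e1 : cd φ (β k) = β k - φ := by
            rw [cd_comm, cd_eq_abs (by rw [_root_.abs_of_nonneg h1]; exact h2),
              _root_.abs_of_nonneg h1]
          have h3 : 0 ≤ β k - a := by linarith [hβk.1]
          have h4 : β k - a ≤ π := by linarith [hβk.2]
          have e2 : cd a (β k) = β k - a := by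
            rw [cd_comm, cd_eq_abs (by rw [_root_.abs_of_nonneg h3]; exact h4),
              _root_.abs_of_nonneg h3]
          rw [e1, e2]; linarith
        · intro k
          have htri := cd_triangle a φ (β k)
          have h1 : 0 ≤ a - φ := by linarith
          have : cd a φ = a - φ := by
            rw [cd_eq_abs (by rw [_root_.abs_of_nonneg h1]; linarith),
              _root_.abs_of_nonneg h1]
          linarith
      exact le_trans (hθ₀min ⟨le_refl a, hab'⟩) hstep
  · -- b' < φ : right excursion
    have hδε : φ - b' < ε := by
      have h2 : φ - θ₀ = ψ := by rw [hφ]; ring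
      have := le_abs_self ψ
      linarith
    have hstep : G b' ≤ G φ := by
      apply sum_est n m _ _ (φ - b') (by linarith) _ _ hmn h2m
      · intro k hk
        have hβk := hβmem k hk
        have h1 : 0 ≤ φ - β k := by linarith [hβk.2]
        have h2 : φ - β k ≤ π := by linarith [hβk.1]
        have e1 : cd φ (β k) = φ - β k := by
          rw [cd_eq_abs (by rw [_root_.abs_of_nonneg h1]; exact h2),
            _root_.abs_of_nonneg h1]
        have h3 : 0 ≤ b' - β k := by linarith [hβk.2]
        have h4 : b' - β k ≤ π := by linarith [hβk.1]
        have e2 : cd b' (β k) = b' - β k := by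
          rw [cd_eq_abs (by rw [_root_.abs_of_nonneg h3]; exact h4),
            _root_.abs_of_nonneg h3]
        rw [e1, e2]; linarith
      · intro k
        have htri := cd_triangle b' φ (β k)
        have h1 : 0 ≤ φ - b' := by linarith
        have : cd b' φ = φ - b' := by
          rw [cd_comm, cd_eq_abs (by rw [_root_.abs_of_nonneg h1]; linarith),
            _root_.abs_of_nonneg h1]
        linarith
    exact le_trans (hθ₀min ⟨hab', le_refl b'⟩) hstep
end

section
/- Let n ≥ 2 be even. There exist configurations (ẑ_1,…,ẑ_n) on the unit circle, a ground truth (z*_1,…,z*_n), and corrupted measurements z_{jk} ∈ C_1 with exactly one corrupted edge per node in the complete graph K_n, such that every coordinate ẑ_j is a local minimizer of its coordinate energy F^j(y) = Σ_{k≠j} d_∠(y, z_{jk} ẑ_k), yet 0 < δ(ẑ) < π, i.e., ẑ does not equal z* up to a global rotation. -/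
namespace SpuriousAux

open Complex

/-- The perfect matching: pair `2i` with `2i+1`. -/
def Mfun {n : ℕ} (hn : Even n) (j : Fin n) : Fin n :=
  if h : Even (j : ℕ) then
    ⟨(j : ℕ) + 1, by
      obtain ⟨m, hm⟩ := hn; obtain ⟨l, hl⟩ := h
      have := j.isLt; omega⟩
  else ⟨(j : ℕ) - 1, lt_of_le_of_lt (Nat.sub_le _ _) j.isLt⟩

lemma Mfun_val_even {n : ℕ} (hn : Even n) {j : Fin n} (h : Even (j : ℕ)) :
    ((Mfun hn j : Fin n) : ℕ) = (j : ℕ) + 1 := by simp [Mfun, h]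

lemma Mfun_val_odd {n : ℕ} (hn : Even n) {j : Fin n} (h : ¬ Even (j : ℕ)) :
    ((Mfun hn j : Fin n) : ℕ) = (j : ℕ) - 1 := by simp [Mfun, h]

lemma Mfun_parity {n : ℕ} (hn : Even n) (j : Fin n) :
    ¬ (Even ((Mfun hn j : Fin n) : ℕ) ↔ Even (j : ℕ)) := by
  by_cases h : Even (j : ℕ)
  · rw [Mfun_val_even hn h]
    simp [Nat.even_add_one, h]
  · rw [Mfun_val_odd hn h]
    obtain ⟨t, ht⟩ := Nat.not_even_iff_odd.mp h
    have : Even ((j : ℕ) - 1) := ⟨t, by omega⟩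
    simp [this, h]

lemma Mfun_ne {n : ℕ} (hn : Even n) (j : Fin n) : Mfun hn j ≠ j := by
  intro hEq
  have := Mfun_parity hn j
  rw [hEq] at this
  exact this Iff.rfl

lemma Mfun_invol {n : ℕ} (hn : Even n) (j : Fin n) : Mfun hn (Mfun hn j) = j := by
  by_cases h : Even (j : ℕ)
  · have h1 := Mfun_val_even hn h
    have h2 : ¬ Even ((Mfun hn j : Fin n) : ℕ) := by
      rw [h1]; simp [Nat.even_add_one, h]
    apply Fin.ext
    rw [Mfun_val_odd hn h2, h1]
    omega
  · have hj1 : 1 ≤ (j : ℕ) := by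
      rcases Nat.eq_zero_or_pos (j : ℕ) with h0 | h0
      · exact absurd (h0 ▸ Even.zero) h
      · exact h0
    have h1 := Mfun_val_odd hn h
    have h2 : Even ((Mfun hn j : Fin n) : ℕ) := by
      rw [h1]
      obtain ⟨t, ht⟩ := Nat.not_even_iff_odd.mp h
      exact ⟨t, by omega⟩
    apply Fin.ext
    rw [Mfun_val_even hn h2, h1]
    omega

/-- The ground truth: `1` on even indices, `I` on odd ones. -/
noncomputable def zs {n : ℕ} (j : Fin n) : ℂ := if Even (j : ℕ) then 1 else Complex.I

lemma abs_zs {n : ℕ} (j : Fin n) : ‖zs j‖ = 1 := by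
  unfold zs; split <;> simp

lemma zs_ne_zero {n : ℕ} (j : Fin n) : zs j ≠ 0 := by
  intro h; have := abs_zs j; rw [h] at this; simp at this

/-- conj (zs j) * zs k for same parity is 1, different parity ±I. -/
lemma zs_mul_conj_same {n : ℕ} {j k : Fin n} (h : Even (j : ℕ) ↔ Even (k : ℕ)) :
    zs j * (starRingEnd ℂ) (zs k) = 1 := by
  unfold zs
  by_cases hj : Even (j : ℕ)
  · simp [hj, h.mp hj]
  · have hk : ¬ Even (k : ℕ) := (not_iff_not.mpr h).mp hj
    simp only [hj, hk, if_false, Complex.conj_I]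
    rw [mul_neg, Complex.I_mul_I, neg_neg]

lemma zs_mul_conj_even_odd {n : ℕ} {j k : Fin n} (hj : Even (j : ℕ)) (hk : ¬ Even (k : ℕ)) :
    zs j * (starRingEnd ℂ) (zs k) = -Complex.I := by
  simp [zs, hj, hk, Complex.conj_I]

lemma zs_mul_conj_odd_even {n : ℕ} {j k : Fin n} (hj : ¬ Even (j : ℕ)) (hk : Even (k : ℕ)) :
    zs j * (starRingEnd ℂ) (zs k) = Complex.I := by
  simp [zs, hj, hk]

/-- Key angular distance computations. -/
lemma dAng_one_one : dAng 1 1 = 0 := by simp [dAng]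

lemma dAng_y_one (y : ℂ) : dAng y 1 = |y.arg| := by simp [dAng]

lemma dAng_one_negI : dAng 1 (-Complex.I) = Real.pi / 2 := by
  have : (1 : ℂ) * (starRingEnd ℂ) (-Complex.I) = Complex.I := by
    simp [Complex.conj_I]
  rw [dAng, this, Complex.arg_I]
  exact abs_of_pos (by positivity)

lemma dAng_one_I : dAng 1 Complex.I = Real.pi / 2 := by
  have : (1 : ℂ) * (starRingEnd ℂ) Complex.I = -Complex.I := by
    simp [Complex.conj_I]
  rw [dAng, this, Complex.arg_neg_I, abs_neg]
  exact abs_of_pos (by positivity)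

lemma dAng_y_negI {y : ℂ} (hy : y ≠ 0) (ha : |y.arg| < Real.pi / 2) :
    dAng y (-Complex.I) = |y.arg + Real.pi / 2| := by
  have h1 : y * (starRingEnd ℂ) (-Complex.I) = y * Complex.I := by
    simp [Complex.conj_I]
  have := abs_lt.mp ha
  have hpi := Real.pi_pos
  rw [dAng, h1, Complex.arg_mul hy Complex.I_ne_zero]
  · rw [Complex.arg_I]
  · rw [Complex.arg_I]
    constructor <;> [linarith; linarith]

lemma dAng_y_I {y : ℂ} (hy : y ≠ 0) (ha : |y.arg| < Real.pi / 2) :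
    dAng y Complex.I = |y.arg - Real.pi / 2| := by
  have h1 : y * (starRingEnd ℂ) Complex.I = y * (-Complex.I) := by
    simp [Complex.conj_I]
  have := abs_lt.mp ha
  have hpi := Real.pi_pos
  rw [dAng, h1, Complex.arg_mul hy (neg_ne_zero.mpr Complex.I_ne_zero)]
  · rw [Complex.arg_neg_I]; ring_nf
  · rw [Complex.arg_neg_I]
    constructor <;> [linarith; linarith]

lemma aux_sum (n : ℕ) (h : Even n) :
    ∑ k ∈ Finset.range n, (if Even k then (1:ℝ) else -1) = 0 := by
  obtain ⟨m, rfl⟩ := h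
  induction m with
  | zero => simp
  | succ p ih =>
    have e : p + 1 + (p + 1) = (p + p) + 1 + 1 := by ring
    rw [e, Finset.sum_range_succ, Finset.sum_range_succ, ih]
    simp [Nat.even_add_one, parity_simps]

lemma aux_sum_fin {n : ℕ} (h : Even n) (j : Fin n) :
    ∑ k : Fin n, (if (Even (k : ℕ) ↔ Even (j : ℕ)) then (1:ℝ) else -1) = 0 := by
  by_cases hj : Even (j : ℕ)
  · simp only [hj, iff_true]
    rw [Fin.sum_univ_eq_sum_range (fun i => if Even i then (1:ℝ) else -1)]
    exact aux_sum n h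
  · simp only [hj, iff_false]
    have : ∀ k : Fin n, (if ¬ Even (k : ℕ) then (1:ℝ) else -1)
        = -(if Even (k : ℕ) then (1:ℝ) else -1) := by
      intro k; by_cases hk : Even (k : ℕ) <;> simp [hk]
    rw [Finset.sum_congr rfl (fun k _ => this k), Finset.sum_neg_distrib]
    rw [Fin.sum_univ_eq_sum_range (fun i => if Even i then (1:ℝ) else -1)]
    rw [aux_sum n h]; ring

end SpuriousAux

open SpuriousAux Complex in
/-- Spurious fixed points for `L_1` multiple rotation averaging: for every even `n ≥ 2` there
exist a configuration `ẑ`, a ground truth `z*`, and measurements `zm` corrupted on a perfect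
matching `M` of the complete graph, such that each `ẑ_j` is a local minimizer of its coordinate
energy `F^j(y) = Σ_{k ≠ j} d_∠(y, zm_{jk} ẑ_k)`, yet `0 < δ(ẑ) < π`. -/
theorem spurious_fixed_points_exist (n : ℕ) (hn : 2 ≤ n) (heven : Even n) :
    ∃ (zhat zstar : Fin n → ℂ) (zm : Fin n → Fin n → ℂ) (M : Fin n → Fin n),
      (∀ j, ‖zhat j‖ = 1) ∧
      (∀ j, ‖zstar j‖ = 1) ∧
      (∀ j k, j ≠ k → ‖zm j k‖ = 1) ∧
      (∀ j, M j ≠ j) ∧ (∀ j, M (M j) = j) ∧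
      (∀ j k, j ≠ k → k ≠ M j → zm j k = zstar j * (starRingEnd ℂ) (zstar k)) ∧
      (∀ j, ∃ ε > 0, ∀ y : ℂ, ‖y‖ = 1 → dAng y (zhat j) < ε →
        (∑ k ∈ Finset.univ.erase j, dAng (zhat j) (zm j k * zhat k)) ≤
          ∑ k ∈ Finset.univ.erase j, dAng y (zm j k * zhat k)) ∧
      (∃ j k, 0 < dAng ((starRingEnd ℂ) (zstar j) * zhat j)
          ((starRingEnd ℂ) (zstar k) * zhat k)) ∧
      (∀ j k, dAng ((starRingEnd ℂ) (zstar j) * zhat j)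
          ((starRingEnd ℂ) (zstar k) * zhat k) < Real.pi) := by
  classical
  set M : Fin n → Fin n := Mfun heven with hM
  set zm : Fin n → Fin n → ℂ :=
    fun j k => if k = M j then 1 else zs j * (starRingEnd ℂ) (zs k) with hzm
  refine ⟨fun _ => 1, zs, zm, M, ?_, ?_, ?_, ?_, ?_, ?_, ?_, ?_, ?_⟩
  · intro j; simp
  · exact abs_zs
  · -- measurements on unit circle
    intro j k hjk
    rw [hzm]
    by_cases h : k = M j
    · simp [h]
    · simp only [h, if_false]
      rw [norm_mul, Complex.norm_conj, abs_zs, abs_zs, mul_one]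
  · exact Mfun_ne heven
  · exact Mfun_invol heven
  · intro j k _ hk
    rw [hzm]; simp [hk]
  · -- local minimality
    intro j
    refine ⟨Real.pi / 2, by positivity, ?_⟩
    intro y hy hylt
    have hy0 : y ≠ 0 := by intro h; rw [h] at hy; simp at hy
    rw [show (fun _ : Fin n => (1:ℂ)) j = (1:ℂ) from rfl] at hylt ⊢
    rw [dAng_y_one] at hylt
    set a : ℝ := |y.arg| with ha
    have ha0 : 0 ≤ a := abs_nonneg _
    -- the sign coefficients
    set c : Fin n → ℝ :=
      fun k => if (k = M j ∨ (Even (k : ℕ) ↔ Even (j : ℕ))) then 1 else -1 with hc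
    -- pointwise inequality
    have key : ∀ k ∈ Finset.univ.erase j,
        dAng 1 (zm j k * 1) + c k * a ≤ dAng y (zm j k * 1) := by
      intro k hk
      rw [mul_one]
      by_cases hMj : k = M j
      · have : zm j k = 1 := by rw [hzm]; simp [hMj]
        rw [this, dAng_one_one, dAng_y_one, hc]
        simp [hMj, ha]
      · by_cases hpar : Even (k : ℕ) ↔ Even (j : ℕ)
        · have : zm j k = 1 := by
            rw [hzm]; simp only [hMj, if_false]
            exact zs_mul_conj_same hpar.symm
          rw [this, dAng_one_one, dAng_y_one, hc]
          simp [hMj, hpar, ha]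
        · have hcneg : c k = -1 := by rw [hc]; simp [hMj, hpar]
          rw [hcneg]
          by_cases hj : Even (j : ℕ)
          · have hk' : ¬ Even (k : ℕ) := fun h => hpar ⟨fun _ => hj, fun _ => h⟩
            have : zm j k = -Complex.I := by
              rw [hzm]; simp only [hMj, if_false]
              exact zs_mul_conj_even_odd hj hk'
            rw [this, dAng_one_negI, dAng_y_negI hy0 hylt]
            have : Real.pi / 2 - a ≤ |y.arg + Real.pi / 2| := by
              have h1 : |(Real.pi/2 : ℝ)| ≤ |y.arg + Real.pi/2| + |y.arg| := by
                calc |(Real.pi/2 : ℝ)| = |(y.arg + Real.pi/2) + (-y.arg)| := by ring_nf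
                _ ≤ |y.arg + Real.pi/2| + |(-y.arg)| := abs_add_le _ _
                _ = |y.arg + Real.pi/2| + |y.arg| := by rw [abs_neg]
              rw [abs_of_pos (by positivity)] at h1
              linarith [h1]
            linarith [this]
          · have hk' : Even (k : ℕ) := by
              by_contra hk''
              exact hpar ⟨fun h => absurd h hk'', fun h => absurd h hj⟩
            have : zm j k = Complex.I := by
              rw [hzm]; simp only [hMj, if_false]
              exact zs_mul_conj_odd_even hj hk'
            rw [this, dAng_one_I, dAng_y_I hy0 hylt]
            have : Real.pi / 2 - a ≤ |y.arg - Real.pi / 2| := by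
              have h1 : |(Real.pi/2 : ℝ)| ≤ |y.arg - Real.pi/2| + |y.arg| := by
                calc |(Real.pi/2 : ℝ)| = |-((y.arg - Real.pi/2) + (-y.arg))| := by ring_nf
                _ = |(y.arg - Real.pi/2) + (-y.arg)| := abs_neg _
                _ ≤ |y.arg - Real.pi/2| + |(-y.arg)| := abs_add_le _ _
                _ = |y.arg - Real.pi/2| + |y.arg| := by rw [abs_neg]
              rw [abs_of_pos (by positivity)] at h1
              linarith [h1]
            linarith [this]
    -- sum of coefficients is 1
    have hparM := Mfun_parity heven j
    have hparM' : ¬ (Even ((M j : Fin n) : ℕ) ↔ Even (j : ℕ)) := by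
      rw [hM]; exact hparM
    have csum : ∑ k ∈ Finset.univ.erase j, c k = 1 := by
      have hMj : c (M j) = 1 := by rw [hc]; simp
      have hcj : c j = 1 := by rw [hc]; simp
      have h4 := aux_sum_fin heven j
      rw [← Finset.sum_erase_add Finset.univ _ (Finset.mem_univ (M j))] at h4
      rw [if_neg hparM'] at h4
      have h2 : ∑ k ∈ Finset.univ.erase (M j), c k
          = ∑ k ∈ Finset.univ.erase (M j),
            (if (Even (k : ℕ) ↔ Even (j : ℕ)) then (1:ℝ) else -1) := by
        apply Finset.sum_congr rfl
        intro k hk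
        have hkM : k ≠ M j := (Finset.mem_erase.mp hk).1
        rw [hc]; simp [hkM]
      have h1 : ∑ k : Fin n, c k = 2 := by
        rw [← Finset.sum_erase_add Finset.univ c (Finset.mem_univ (M j)), h2, hMj]
        linarith
      have h6 := Finset.sum_erase_add Finset.univ c (Finset.mem_univ j)
      rw [h1, hcj] at h6
      linarith
    calc ∑ k ∈ Finset.univ.erase j, dAng 1 (zm j k * 1)
        ≤ ∑ k ∈ Finset.univ.erase j, (dAng 1 (zm j k * 1) + c k * a) := by
          rw [Finset.sum_add_distrib, ← Finset.sum_mul, csum]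
          nlinarith [ha0]
      _ ≤ ∑ k ∈ Finset.univ.erase j, dAng y (zm j k * 1) :=
          Finset.sum_le_sum key
  · -- existence of a pair with positive deviation
    refine ⟨⟨0, by omega⟩, ⟨1, by omega⟩, ?_⟩
    have h0 : zs (⟨0, by omega⟩ : Fin n) = 1 := by simp [zs]
    have h1 : zs (⟨1, by omega⟩ : Fin n) = Complex.I := by simp [zs]
    rw [h0, h1]
    simp only [map_one, one_mul, Complex.conj_I, mul_one]
    rw [show ((-Complex.I : ℂ)) = -Complex.I from rfl]
    have : dAng 1 (-Complex.I) = Real.pi / 2 := dAng_one_negI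
    rw [this]
    positivity
  · -- all deviations less than π
    intro j k
    have hval : ∀ i : Fin n, (starRingEnd ℂ) (zs i) * 1 = if Even (i : ℕ) then 1 else -Complex.I := by
      intro i
      by_cases h : Even (i : ℕ) <;> simp [zs, h, Complex.conj_I]
    rw [hval j, hval k]
    have hpi := Real.pi_pos
    by_cases hj : Even (j : ℕ) <;> by_cases hk : Even (k : ℕ) <;> simp only [hj, hk, if_true, if_false]
    · rw [dAng_one_one]; linarith
    · rw [dAng_one_negI]; linarith
    · have : dAng (-Complex.I) 1 = Real.pi / 2 := by
        rw [dAng]; simp [Complex.arg_neg_I]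
        linarith
      rw [this]; linarith
    · have : dAng (-Complex.I) (-Complex.I) = 0 := by
        rw [dAng]
        have : (-Complex.I) * (starRingEnd ℂ) (-Complex.I) = 1 := by
          simp [Complex.conj_I, Complex.I_mul_I]
        rw [this]; simp
      rw [this]; linarith
end

section
/- Let B̄ = {x ∈ R^D : ‖x − c‖ ≤ r} be a closed ball, let R be a finite subset of B̄, and suppose there is a unit vector v such that no point of R lies in the set {x ∈ ∂B : ⟨v, x − c⟩ ≤ 0} (the closed half of the boundary sphere opposite v). Then R is contained in a closed ball of radius strictly less than r. -/
open RealInnerProductSpace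

/-- Shrinking ball lemma (Euclidean version): if a finite set `R` lies in the closed ball
`B̄(c, r)` and no point of `R` lies on the closed boundary hemisphere
`{x : ‖x − c‖ = r, ⟪v, x − c⟫ ≤ 0}` for some unit vector `v`, then `R` is contained in a
closed ball of radius strictly less than `r`. -/
theorem shrinking_ball (D : ℕ) (c : EuclideanSpace ℝ (Fin D)) (r : ℝ)
    (R : Finset (EuclideanSpace ℝ (Fin D)))
    (hR : (R : Set (EuclideanSpace ℝ (Fin D))) ⊆ Metric.closedBall c r)
    (v : EuclideanSpace ℝ (Fin D)) (hv : ‖v‖ = 1)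
    (hbd : ∀ x ∈ R, ¬(‖x - c‖ = r ∧ ⟪v, x - c⟫ ≤ 0)) :
    ∃ (c' : EuclideanSpace ℝ (Fin D)) (r' : ℝ), r' < r ∧
      (R : Set (EuclideanSpace ℝ (Fin D))) ⊆ Metric.closedBall c' r' := by
  rcases R.eq_empty_or_nonempty with hE | hne
  · exact ⟨c, r - 1, by linarith, by simp [hE]⟩
  -- per-point small t
  have key : ∀ x ∈ R, ∃ t > 0, ∀ s : ℝ, 0 < s → s ≤ t → ‖x - (c + s • v)‖ < r := by
    intro x hx
    have hle : ‖x - c‖ ≤ r := by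
      have := hR (by exact_mod_cast hx)
      simpa [Metric.mem_closedBall, dist_eq_norm] using this
    rcases lt_or_eq_of_le hle with hlt | heq
    · refine ⟨(r - ‖x - c‖) / 2, by linarith, fun s hs hst => ?_⟩
      have : ‖x - (c + s • v)‖ ≤ ‖x - c‖ + ‖s • v‖ := by
        have : x - (c + s • v) = (x - c) - s • v := by abel
        rw [this]; exact norm_sub_le _ _
      have hsv : ‖s • v‖ = s := by
        rw [norm_smul, hv, mul_one, Real.norm_eq_abs, abs_of_pos hs]
      linarith [this, hsv ▸ this]
    · have hip : 0 < ⟪v, x - c⟫ := by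
        by_contra h
        exact hbd x hx ⟨heq, le_of_not_gt h⟩
      refine ⟨⟪v, x - c⟫, hip, fun s hs hst => ?_⟩
      have hexp : ‖x - (c + s • v)‖ ^ 2 = ‖x - c‖ ^ 2 - 2 * (s * ⟪v, x - c⟫) + s ^ 2 := by
        have h1 : x - (c + s • v) = (x - c) - s • v := by abel
        rw [h1, @norm_sub_sq_real]
        rw [real_inner_smul_right, real_inner_comm, norm_smul, Real.norm_eq_abs]
        rw [hv, mul_one, sq_abs]
      have hr0 : 0 < r := by
        rw [← heq, norm_pos_iff]
        intro h0
        rw [h0, inner_zero_right] at hip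
        exact lt_irrefl 0 hip
      have hsq : ‖x - (c + s • v)‖ ^ 2 < r ^ 2 := by
        rw [hexp, heq]
        nlinarith
      exact lt_of_pow_lt_pow_left₀ 2 hr0.le hsq
  choose! t ht hts using key
  set t0 := R.inf' hne t with ht0
  have ht0pos : 0 < t0 := by
    rw [ht0, Finset.lt_inf'_iff]
    exact fun x hx => ht x hx
  have hall : ∀ x ∈ R, ‖x - (c + t0 • v)‖ < r := by
    intro x hx
    exact hts x hx t0 ht0pos (Finset.inf'_le _ hx)
  refine ⟨c + t0 • v, R.sup' hne (fun x => ‖x - (c + t0 • v)‖), ?_, ?_⟩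
  · rw [Finset.sup'_lt_iff]
    exact hall
  · intro x hx
    have hx' : x ∈ R := by exact_mod_cast hx
    simp only [Metric.mem_closedBall, dist_eq_norm]
    exact Finset.le_sup' (fun y => ‖y - (c + t0 • v)‖) hx'
end

section
/- Let X be a finite multiset of n reals, let δ > 0, and suppose at least ⌈3n/4⌉ + 1 elements of X lie in [−δ/2, δ/2] with at least one element in (−δ/2, δ/2) counted among the 1/4-trimmed set. If fewer than n/2 of the trimmed elements equal the left endpoint −δ/2, then the trimmed average ave(T_{0.25}X) > −δ/2. -/
open Classical

/-- In a sorted list, if the number of elements below `c` is at most `i`, then the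
entry at index `i` is at least `c`. -/
lemma sorted_getD_ge (l : List ℝ) (hs : l.Pairwise (· ≤ ·)) (c : ℝ) (i : ℕ) (hi : i < l.length)
    (hk : (l.filter (fun x => decide (x < c))).length ≤ i) : c ≤ l.getD i 0 := by
  by_contra h
  push_neg at h
  rw [List.getD_eq_getElem l 0 hi] at h
  -- every entry with index ≤ i is < c
  have hall : ∀ x ∈ l.take (i + 1), decide (x < c) = true := by
    intro x hx
    rw [List.mem_iff_getElem] at hx
    obtain ⟨j, hj, rfl⟩ := hx
    have hj' : j < l.length := by rw [List.length_take] at hj; omega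
    rw [List.getElem_take]
    have hji : j ≤ i := by
      have := hj.trans_le (List.length_take_le _ _)
      omega
    have : l[j] ≤ l[i] := by
      have := hs.rel_get_of_le (a := ⟨j, hj'⟩) (b := ⟨i, hi⟩) (by simpa using hji)
      simpa using this
    simp [lt_of_le_of_lt this h]
  have hsub : ((l.take (i + 1)).filter (fun x => decide (x < c))).Sublist
      (l.filter (fun x => decide (x < c))) := (List.take_sublist _ _).filter _
  have hlen1 : ((l.take (i + 1)).filter (fun x => decide (x < c))).length = i + 1 := by
    rw [List.filter_eq_self.mpr hall, List.length_take]
    omega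
  have := hsub.length_le
  omega

/-- If at least `⌈3n/4⌉ + 1` elements of `X` lie in `[−δ/2, δ/2]`, some trimmed element lies in
the open interval `(−δ/2, δ/2)`, and fewer than `n/2` of the trimmed elements equal the left
endpoint `−δ/2`, then the trimmed average is strictly greater than `−δ/2`. -/
theorem trimmed_mean_strictly_above_boundary (X : Multiset ℝ) (n : ℕ) (hn : X.card = n)
    (δ : ℝ) (hδ : 0 < δ)
    (hcount : ⌈3 * (n : ℝ) / 4⌉₊ + 1 ≤ (X.filter (fun x => -δ / 2 ≤ x ∧ x ≤ δ / 2)).card)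
    (hmem : ∃ x ∈ trim25 X, -δ / 2 < x ∧ x < δ / 2)
    (hleft : (((trim25 X).filter (fun x => x = -δ / 2)).card : ℝ) < (n : ℝ) / 2) :
    -δ / 2 < (trim25 X).sum / ((trim25 X).card : ℝ) := by
  obtain ⟨x0, hx0T, hx0l, hx0r⟩ := hmem
  set l := X.sort (· ≤ ·) with hl
  have hsort : l.Pairwise (· ≤ ·) := X.pairwise_sort _
  have hlen : l.length = n := by rw [hl, Multiset.length_sort, hn]
  -- n ≥ 1
  have hn1 : 1 ≤ n := by
    by_contra h
    have : n = 0 := by omega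
    subst this
    have := Multiset.card_le_card (Multiset.filter_le (fun x => -δ / 2 ≤ x ∧ x ≤ δ / 2) X)
    rw [hn] at this
    simp at hcount
    omega
  -- count of elements below -δ/2
  have hcompl : (X.filter (fun x => x < -δ / 2)).card + ⌈3 * (n : ℝ) / 4⌉₊ + 1 ≤ n := by
    have hle : (X.filter (fun x => -δ / 2 ≤ x ∧ x ≤ δ / 2)).card ≤
        (X.filter (fun x => ¬ x < -δ / 2)).card := by
      apply Multiset.card_le_card
      apply Multiset.monotone_filter_right
      intro x hx
      exact not_lt.mpr hx.1
    have hsplit : (X.filter (fun x => x < -δ / 2)).card +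
        (X.filter (fun x => ¬ x < -δ / 2)).card = n := by
      rw [← hn, ← Multiset.card_add, Multiset.filter_add_not]
    omega
  -- ceil inequality: ⌈n/4⌉ + ⌈3n/4⌉ ≥ n
  have hceil : n ≤ ⌈(0.25 : ℝ) * n⌉₊ + ⌈3 * (n : ℝ) / 4⌉₊ := by
    have h1 : (n : ℝ) = 0.25 * n + 3 * (n : ℝ) / 4 := by ring
    calc n = ⌈(n : ℝ)⌉₊ := (Nat.ceil_natCast n).symm
    _ = ⌈(0.25 : ℝ) * n + 3 * (n : ℝ) / 4⌉₊ := by rw [← h1]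
    _ ≤ _ := Nat.ceil_add_le _ _
  have hq1 : 1 ≤ ⌈(0.25 : ℝ) * n⌉₊ := by
    have h0 : (0 : ℝ) < 0.25 * n := by
      have : (1 : ℝ) ≤ n := by exact_mod_cast hn1
      nlinarith
    exact Nat.ceil_pos.mpr h0
  have hqn : ⌈(0.25 : ℝ) * n⌉₊ ≤ n := by
    apply Nat.ceil_le.mpr
    have : (0 : ℝ) ≤ n := by positivity
    nlinarith
  -- the 0.25-quantile is ≥ -δ/2
  have hq25 : -δ / 2 ≤ mQuantile 0.25 X := by
    have hidx : ⌈(0.25 : ℝ) * n⌉₊ - 1 < l.length := by rw [hlen]; omega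
    have hfilt : (l.filter (fun x => decide (x < -δ / 2))).length ≤ ⌈(0.25 : ℝ) * n⌉₊ - 1 := by
      have : (l.filter (fun x => decide (x < -δ / 2))).length =
          (X.filter (fun x => x < -δ / 2)).card := by
        rw [← Multiset.coe_card, ← Multiset.filter_coe, hl, Multiset.sort_eq]
      omega
    have := sorted_getD_ge l hsort (-δ / 2) (⌈(0.25 : ℝ) * n⌉₊ - 1) hidx hfilt
    rwa [mQuantile, hn]
  -- all trimmed elements are ≥ -δ/2
  have hTge : ∀ x ∈ trim25 X, -δ / 2 ≤ x := by
    intro x hx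
    rw [trim25, Multiset.mem_filter] at hx
    exact hq25.trans hx.2.1
  -- strict sum bound
  set T := trim25 X with hT
  have hx0T' := hx0T
  obtain ⟨T', hT'⟩ : ∃ T', T = x0 ::ₘ T' := ⟨T.erase x0, (Multiset.cons_erase hx0T).symm⟩
  have hsum' : (T'.card : ℝ) * (-δ / 2) ≤ T'.sum := by
    have := Multiset.card_nsmul_le_sum (s := T') (a := -δ / 2) (fun x hx =>
      hTge x (by rw [hT']; exact Multiset.mem_cons_of_mem hx))
    simpa [nsmul_eq_mul] using this
  have hcardpos : (0 : ℝ) < (T.card : ℝ) := by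
    have : x0 ∈ T := hx0T
    have : T.card ≠ 0 := by
      intro h
      rw [Multiset.card_eq_zero] at h
      simp [h] at this
    positivity
  rw [lt_div_iff₀ hcardpos]
  rw [hT', Multiset.sum_cons, Multiset.card_cons]
  push_cast
  nlinarith [hsum']
end
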